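/- The number R(N) of integer solutions of the equation x_1^3 + x_2^3 + x_3^3 − 1 = 0 in the cube [−N, N]^3 satisfies R(N) ≪ N^{1+ε}. -/

import Mathlib

set_option maxHeartbeats 1000000

lemma geom_lin (r : ℝ) (hr : 1 < r) : ∃ C : ℝ, 1 ≤ C ∧ ∀ a : ℕ, (a + 1 : ℝ) ≤ C * r ^ a := by
  refine ⟨max 1 (1 / (r - 1)), le_max_left _ _, fun a => ?_⟩
  have h1 : (1 : ℝ) + a * (r - 1) ≤ r ^ a := by
    have := one_add_mul_le_pow (a := r - 1) (by linarith) a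
    simpa using this
  have hC1 : (1:ℝ) ≤ max 1 (1 / (r - 1)) := le_max_left _ _
  have hC2 : 1 / (r - 1) ≤ max 1 (1 / (r - 1)) := le_max_right _ _
  have hr1 : 0 < r - 1 := by linarith
  have hC3 : (1:ℝ) ≤ max 1 (1 / (r - 1)) * (r - 1) := by
    rw [← div_le_iff₀ hr1] at *
    exact hC2.trans_eq rfl
  have ha : (0:ℝ) ≤ a := Nat.cast_nonneg a
  nlinarith [mul_le_mul_of_nonneg_left h1 (le_trans zero_le_one hC1)]

lemma divisor_bound (ε : ℝ) (hε : 0 < ε) :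
    ∃ C : ℝ, 1 ≤ C ∧ ∀ n : ℕ, n ≠ 0 → (n.divisors.card : ℝ) ≤ C * (n : ℝ) ^ ε := by
  have h2 : (1:ℝ) < (2:ℝ) ^ ε := by
    rw [show (1:ℝ) = (2:ℝ) ^ (0:ℝ) by simp]
    exact Real.rpow_lt_rpow_left_iff (by norm_num) |>.mpr hε
  obtain ⟨C₀, hC₀1, hC₀⟩ := geom_lin ((2:ℝ) ^ ε) h2
  set K : ℕ := ⌈(2:ℝ) ^ (1/ε)⌉₊ with hK
  refine ⟨C₀ ^ K, one_le_pow₀ hC₀1, fun n hn => ?_⟩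
  rw [Nat.card_divisors hn]
  push_cast
  have key : ∀ p ∈ n.primeFactors,
      ((n.factorization p : ℝ) + 1) ≤
        (if p < K then C₀ else 1) * (p:ℝ) ^ (ε * (n.factorization p : ℝ)) := by
    intro p hp
    have hpp : p.Prime := Nat.prime_of_mem_primeFactors hp
    have hp2 : (2:ℝ) ≤ (p:ℝ) := by exact_mod_cast hpp.two_le
    set a := n.factorization p with hadef
    have hrw : (p:ℝ) ^ (ε * (a:ℝ)) = ((p:ℝ) ^ ε) ^ a := by
      rw [← Real.rpow_natCast ((p:ℝ) ^ ε) a, ← Real.rpow_mul (by positivity), mul_comm]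
    by_cases hpK : p < K
    · simp only [hpK, if_true]
      calc ((a:ℝ) + 1) ≤ C₀ * ((2:ℝ) ^ ε) ^ a := hC₀ a
        _ ≤ C₀ * ((p:ℝ) ^ ε) ^ a := by
            apply mul_le_mul_of_nonneg_left _ (by linarith)
            apply pow_le_pow_left₀ (by positivity)
            exact Real.rpow_le_rpow (by norm_num) hp2 hε.le
        _ = C₀ * (p:ℝ) ^ (ε * (a:ℝ)) := by rw [hrw]
    · simp only [hpK, if_false, one_mul]
      have hKp : ((2:ℝ) ^ (1/ε)) ≤ (p:ℝ) := by
        calc ((2:ℝ) ^ (1/ε)) ≤ (K:ℝ) := Nat.le_ceil _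
          _ ≤ (p:ℝ) := by exact_mod_cast Nat.not_lt.mp hpK
      have h2p : (2:ℝ) ≤ (p:ℝ) ^ ε := by
        have h := Real.rpow_le_rpow (by positivity) hKp hε.le
        rwa [← Real.rpow_mul (by norm_num), one_div, inv_mul_cancel₀ hε.ne',
          Real.rpow_one] at h
      calc ((a:ℝ) + 1) ≤ (2:ℝ) ^ a := by
            have h := Nat.lt_two_pow_self (n := a)
            have h' : a + 1 ≤ 2 ^ a := h
            exact_mod_cast h'
        _ ≤ ((p:ℝ) ^ ε) ^ a := pow_le_pow_left₀ (by norm_num) h2p a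
        _ = (p:ℝ) ^ (ε * (a:ℝ)) := hrw.symm
  calc (∏ p ∈ n.primeFactors, ((n.factorization p : ℝ) + 1))
      ≤ ∏ p ∈ n.primeFactors,
          (if p < K then C₀ else 1) * (p:ℝ) ^ (ε * (n.factorization p : ℝ)) :=
        Finset.prod_le_prod (fun p _ => by positivity) key
    _ = (∏ p ∈ n.primeFactors, (if p < K then C₀ else 1)) *
          ∏ p ∈ n.primeFactors, (p:ℝ) ^ (ε * (n.factorization p : ℝ)) :=
        Finset.prod_mul_distrib
    _ ≤ C₀ ^ K * (n:ℝ) ^ ε := by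
        have hB : (∏ p ∈ n.primeFactors, (p:ℝ) ^ (ε * (n.factorization p : ℝ)))
            = (n:ℝ) ^ ε := by
          have hterm : ∀ p ∈ n.primeFactors,
              (p:ℝ) ^ (ε * (n.factorization p : ℝ))
                = ((p:ℝ) ^ (n.factorization p)) ^ ε := by
            intro p hp
            rw [mul_comm, Real.rpow_mul (by positivity), Real.rpow_natCast]
          rw [Finset.prod_congr rfl hterm,
            Real.finset_prod_rpow _ _ (fun p _ => by positivity)]
          congr 1
          have := Nat.factorization_prod_pow_eq_self hn
          rw [Finsupp.prod] at this
          rw [Nat.support_factorization] at this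
          exact_mod_cast congrArg (fun m : ℕ => (m : ℝ)) this
        rw [hB]
        apply mul_le_mul_of_nonneg_right _ (Real.rpow_nonneg (Nat.cast_nonneg n) ε)
        rw [Finset.prod_ite, Finset.prod_const, Finset.prod_const, one_pow, mul_one]
        apply pow_le_pow_right₀ hC₀1
        calc (n.primeFactors.filter (· < K)).card
            ≤ (Finset.range K).card := Finset.card_le_card (fun p hp => by
              simp only [Finset.mem_filter] at hp
              exact Finset.mem_range.mpr hp.2)
          _ = K := Finset.card_range K

lemma pair_count (z m : ℤ) (hm : m ≠ 0) (G : Finset (Fin 3 → ℤ))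
    (hG : ∀ x ∈ G, x 0 ^ 3 + x 1 ^ 3 = m ∧ x 2 = z) :
    G.card ≤ 4 * m.natAbs.divisors.card := by
  classical
  set D : Finset ℤ := m.natAbs.divisors.image (fun d : ℕ => (d:ℤ)) ∪
      m.natAbs.divisors.image (fun d : ℕ => -(d:ℤ)) with hD
  have hmap : ∀ x ∈ G, x 0 + x 1 ∈ D := by
    intro x hx
    obtain ⟨e, -⟩ := hG x hx
    have hdvd : (x 0 + x 1) ∣ m := ⟨x 0 ^ 2 - x 0 * x 1 + x 1 ^ 2, by rw [← e]; ring⟩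
    have hs0 : x 0 + x 1 ≠ 0 := by
      intro h
      apply hm
      have h1 : x 1 = - x 0 := by linarith
      rw [← e, h1]; ring
    have hmem : (x 0 + x 1).natAbs ∈ m.natAbs.divisors :=
      Nat.mem_divisors.mpr ⟨Int.natAbs_dvd_natAbs.mpr hdvd, Int.natAbs_ne_zero.mpr hm⟩
    rcases Int.natAbs_eq (x 0 + x 1) with h | h
    · exact Finset.mem_union_left _ (Finset.mem_image.mpr ⟨_, hmem, h.symm⟩)
    · exact Finset.mem_union_right _ (Finset.mem_image.mpr ⟨_, hmem, h.symm⟩)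
  rw [Finset.card_eq_sum_card_fiberwise hmap]
  have hfib : ∀ s ∈ D, (G.filter fun x => x 0 + x 1 = s).card ≤ 2 := by
    intro s hs
    have hs0 : s ≠ 0 := by
      rw [hD, Finset.mem_union, Finset.mem_image, Finset.mem_image] at hs
      rcases hs with ⟨d, hd, rfl⟩ | ⟨d, hd, rfl⟩ <;>
        simpa using (Nat.pos_of_mem_divisors hd).ne'
    set E := G.filter fun x => x 0 + x 1 = s with hE
    rcases E.eq_empty_or_nonempty with h | ⟨x₀, hx₀⟩
    · simp [h]
    · have hsub : E ⊆ {x₀, ![x₀ 1, x₀ 0, x₀ 2]} := by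
        intro y hy
        have hy' := Finset.mem_filter.mp hy
        have hx₀' := Finset.mem_filter.mp hx₀
        obtain ⟨ey, ezy⟩ := hG y hy'.1
        obtain ⟨ex, ezx⟩ := hG x₀ hx₀'.1
        have hsy : y 0 + y 1 = s := hy'.2
        have hsx : x₀ 0 + x₀ 1 = s := hx₀'.2
        have e1 : 3 * s * (y 0 * y 1) = s ^ 3 - m := by rw [← hsy, ← ey]; ring
        have e2 : 3 * s * (x₀ 0 * x₀ 1) = s ^ 3 - m := by rw [← hsx, ← ex]; ring
        have hp : y 0 * y 1 = x₀ 0 * x₀ 1 :=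
          mul_left_cancel₀ (by simpa using hs0) (e1.trans e2.symm)
        have hquad : (y 0 - x₀ 0) * (y 0 - x₀ 1) = 0 := by
          linear_combination y 0 * hsy - y 0 * hsx - hp
        rcases mul_eq_zero.mp hquad with h0 | h0
        · have h00 : y 0 = x₀ 0 := by linarith
          have h11 : y 1 = x₀ 1 := by linarith
          have h22 : y 2 = x₀ 2 := by rw [ezy, ezx]
          have : y = x₀ := by
            funext i; fin_cases i <;> assumption
          simp [this]
        · have h00 : y 0 = x₀ 1 := by linarith
          have h11 : y 1 = x₀ 0 := by linarith
          have h22 : y 2 = x₀ 2 := by rw [ezy, ezx]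
          have : y = ![x₀ 1, x₀ 0, x₀ 2] := by
            funext i; fin_cases i <;> simpa
          simp [this]
      calc E.card ≤ ({x₀, ![x₀ 1, x₀ 0, x₀ 2]} : Finset (Fin 3 → ℤ)).card :=
            Finset.card_le_card hsub
        _ ≤ 2 := by
            apply le_trans (Finset.card_insert_le _ _)
            simp
  calc ∑ s ∈ D, (G.filter fun x => x 0 + x 1 = s).card
      ≤ ∑ _s ∈ D, 2 := Finset.sum_le_sum hfib
    _ = D.card * 2 := by rw [Finset.sum_const, smul_eq_mul]
    _ ≤ (m.natAbs.divisors.card + m.natAbs.divisors.card) * 2 := by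
        apply Nat.mul_le_mul_right
        exact le_trans (Finset.card_union_le _ _)
          (Nat.add_le_add (Finset.card_image_le) (Finset.card_image_le))
    _ = 4 * m.natAbs.divisors.card := by ring

theorem stmt_5 :
    ∀ ε : ℝ, 0 < ε → ∃ C : ℝ, 0 < C ∧ ∀ N : ℕ, 1 ≤ N →
      (Set.ncard {x : Fin 3 → ℤ |
          (∀ i, |x i| ≤ (N : ℤ)) ∧ x 0 ^ 3 + x 1 ^ 3 + x 2 ^ 3 - 1 = 0} : ℝ)
        ≤ C * (N : ℝ) ^ ((1 : ℝ) + ε) := by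
  intro ε hε
  obtain ⟨C₁, hC₁1, hC₁⟩ := divisor_bound (ε/3) (by positivity)
  set c₂ : ℝ := (2:ℝ) ^ (ε/3) with hc₂
  have hc₂pos : 0 < c₂ := Real.rpow_pos_of_pos (by norm_num) _
  have hC₁0 : (0:ℝ) < C₁ := lt_of_lt_of_le one_pos hC₁1
  refine ⟨3 + 12 * C₁ * c₂, by positivity, fun N hN => ?_⟩
  classical
  have hN1Z : (1:ℤ) ≤ (N:ℤ) := by exact_mod_cast hN
  have hN1R : (1:ℝ) ≤ (N:ℝ) := by exact_mod_cast hN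
  have hNposR : (0:ℝ) < (N:ℝ) := lt_of_lt_of_le one_pos hN1R
  set I : Finset ℤ := Finset.Icc (-(N:ℤ)) N with hI
  set F : Finset (Fin 3 → ℤ) :=
    (Fintype.piFinset fun _ : Fin 3 => I).filter
      (fun x => x 0 ^ 3 + x 1 ^ 3 + x 2 ^ 3 - 1 = 0) with hF
  have hset : {x : Fin 3 → ℤ |
      (∀ i, |x i| ≤ (N : ℤ)) ∧ x 0 ^ 3 + x 1 ^ 3 + x 2 ^ 3 - 1 = 0} = ↑F := by
    ext x
    simp [hF, hI, Fintype.mem_piFinset, Finset.mem_Icc, abs_le, Finset.mem_filter]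
  rw [hset, Set.ncard_coe_finset]
  have hIcard : I.card = 2 * N + 1 := by
    rw [hI, Int.card_Icc]
    omega
  have hIcardR : (I.card : ℝ) ≤ 3 * (N:ℝ) := by
    rw [hIcard]
    push_cast
    linarith
  have hmemI : ∀ x ∈ F, x 2 ∈ I := by
    intro x hx
    exact (Fintype.mem_piFinset.mp (Finset.mem_filter.mp hx).1) 2
  have hcard : F.card = ∑ z ∈ I, (F.filter fun x => x 2 = z).card :=
    Finset.card_eq_sum_card_fiberwise hmemI
  have h1I : (1:ℤ) ∈ I := by
    rw [hI, Finset.mem_Icc]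
    have h0N : (0:ℤ) ≤ (N:ℤ) := Int.natCast_nonneg N
    exact ⟨by linarith, hN1Z⟩
  have hsplit : ∑ z ∈ I, (F.filter fun x => x 2 = z).card
      = (F.filter fun x => x 2 = 1).card
        + ∑ z ∈ I.erase 1, (F.filter fun x => x 2 = z).card :=
    (Finset.add_sum_erase I _ h1I).symm
  have cube_inj : ∀ a b : ℤ, a ^ 3 = b ^ 3 → a = b := by
    intro a b h
    exact (Odd.strictMono_pow (R := ℤ) (by decide : Odd 3)).injective h
  have cube_mono := (Odd.strictMono_pow (R := ℤ) (by decide : Odd 3)).monotone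
  -- z = 1 fiber
  have hfib1 : (F.filter fun x => x 2 = 1).card ≤ I.card := by
    apply Finset.card_le_card_of_injOn (fun x => x 0)
    · intro x hx
      have hx' := Finset.mem_filter.mp hx
      exact (Fintype.mem_piFinset.mp (Finset.mem_filter.mp hx'.1).1) 0
    · intro x hx y hy hxy
      simp only [Finset.mem_coe, Finset.mem_filter] at hx hy
      obtain ⟨hxF, hx2⟩ := hx
      obtain ⟨hyF, hy2⟩ := hy
      have ex := (Finset.mem_filter.mp hxF).2
      have ey := (Finset.mem_filter.mp hyF).2
      rw [hx2] at ex
      rw [hy2] at ey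
      have hx1 : x 1 = - x 0 := by
        apply cube_inj
        have : (- x 0) ^ 3 = - (x 0 ^ 3) := by ring
        rw [this]
        linarith
      have hy1 : y 1 = - y 0 := by
        apply cube_inj
        have : (- y 0) ^ 3 = - (y 0 ^ 3) := by ring
        rw [this]
        linarith
      have hxy' : x 0 = y 0 := hxy
      funext i
      fin_cases i
      · exact hxy'
      · show x 1 = y 1
        rw [hx1, hy1, hxy']
      · show x 2 = y 2
        rw [hx2, hy2]
  -- z ≠ 1 fibers
  have hfibz : ∀ z ∈ I.erase 1, ((F.filter fun x => x 2 = z).card : ℝ)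
      ≤ 4 * C₁ * c₂ * (N:ℝ) ^ ε := by
    intro z hz
    have hz1 : z ≠ 1 := (Finset.mem_erase.mp hz).1
    have hzI : z ∈ I := (Finset.mem_erase.mp hz).2
    rw [hI, Finset.mem_Icc] at hzI
    have hm : (1 - z ^ 3 : ℤ) ≠ 0 := by
      intro h
      apply hz1
      apply cube_inj
      have : z ^ 3 = 1 := by linarith
      rw [this]; ring
    have hcount := pair_count z (1 - z ^ 3) hm (F.filter fun x => x 2 = z) ?_
    swap
    · intro x hx
      have hx' := Finset.mem_filter.mp hx
      have ex := (Finset.mem_filter.mp hx'.1).2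
      refine ⟨?_, hx'.2⟩
      rw [hx'.2] at ex
      linarith
    have hd := hC₁ (1 - z ^ 3).natAbs (Int.natAbs_ne_zero.mpr hm)
    -- bound natAbs
    have hup : z ^ 3 ≤ (N:ℤ) ^ 3 := cube_mono hzI.2
    have hlo : (-(N:ℤ)) ^ 3 ≤ z ^ 3 := cube_mono hzI.1
    have hlo' : -((N:ℤ) ^ 3) ≤ z ^ 3 := by
      have : (-(N:ℤ)) ^ 3 = -((N:ℤ) ^ 3) := by ring
      linarith [hlo]
    have hN3 : (1:ℤ) ≤ (N:ℤ)^3 := one_le_pow₀ hN1Z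
    have habsZ : ((1 - z ^ 3).natAbs : ℤ) ≤ 2 * (N:ℤ) ^ 3 := by
      rw [← Int.abs_eq_natAbs]
      rw [abs_le]
      constructor <;> linarith
    have habs : ((1 - z ^ 3).natAbs : ℝ) ≤ 2 * (N:ℝ) ^ (3:ℕ) := by
      exact_mod_cast habsZ
    have hrp : ((1 - z ^ 3).natAbs : ℝ) ^ (ε/3) ≤ c₂ * (N:ℝ) ^ ε := by
      calc ((1 - z ^ 3).natAbs : ℝ) ^ (ε/3)
          ≤ (2 * (N:ℝ) ^ (3:ℕ)) ^ (ε/3) :=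
            Real.rpow_le_rpow (Nat.cast_nonneg _) habs (by positivity)
        _ = c₂ * ((N:ℝ) ^ (3:ℕ)) ^ (ε/3) := Real.mul_rpow (by norm_num) (by positivity)
        _ = c₂ * (N:ℝ) ^ ε := by
            congr 1
            rw [← Real.rpow_natCast (N:ℝ) 3, ← Real.rpow_mul hNposR.le]
            congr 1
            push_cast
            ring
    calc ((F.filter fun x => x 2 = z).card : ℝ)
        ≤ 4 * ((1 - z ^ 3).natAbs.divisors.card : ℝ) := by exact_mod_cast hcount
      _ ≤ 4 * (C₁ * ((1 - z ^ 3).natAbs : ℝ) ^ (ε/3)) := by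
          apply mul_le_mul_of_nonneg_left hd (by norm_num)
      _ ≤ 4 * (C₁ * (c₂ * (N:ℝ) ^ ε)) := by
          apply mul_le_mul_of_nonneg_left _ (by norm_num)
          exact mul_le_mul_of_nonneg_left hrp hC₁0.le
      _ = 4 * C₁ * c₂ * (N:ℝ) ^ ε := by ring
  -- assemble
  have hNpow : (N:ℝ) ^ ((1:ℝ) + ε) = (N:ℝ) * (N:ℝ) ^ ε := by
    rw [Real.rpow_add hNposR, Real.rpow_one]
  have hNle : (N:ℝ) ≤ (N:ℝ) ^ ((1:ℝ) + ε) := by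
    calc (N:ℝ) = (N:ℝ) ^ (1:ℝ) := (Real.rpow_one _).symm
      _ ≤ (N:ℝ) ^ ((1:ℝ) + ε) :=
          Real.rpow_le_rpow_of_exponent_le hN1R (by linarith)
  have hsum : (∑ z ∈ I.erase 1, ((F.filter fun x => x 2 = z).card : ℝ))
      ≤ ((I.erase 1).card : ℝ) * (4 * C₁ * c₂ * (N:ℝ) ^ ε) := by
    calc (∑ z ∈ I.erase 1, ((F.filter fun x => x 2 = z).card : ℝ))
        ≤ ∑ _z ∈ I.erase 1, (4 * C₁ * c₂ * (N:ℝ) ^ ε) := Finset.sum_le_sum hfibz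
      _ = ((I.erase 1).card : ℝ) * (4 * C₁ * c₂ * (N:ℝ) ^ ε) := by
          rw [Finset.sum_const, nsmul_eq_mul]
  have herase : ((I.erase 1).card : ℝ) ≤ 3 * (N:ℝ) :=
    le_trans (by exact_mod_cast Finset.card_erase_le) hIcardR
  have htot : (F.card : ℝ)
      ≤ 3 * (N:ℝ) + 3 * (N:ℝ) * (4 * C₁ * c₂ * (N:ℝ) ^ ε) := by
    have hc : (F.card : ℝ) = ((F.filter fun x => x 2 = 1).card : ℝ)
        + ∑ z ∈ I.erase 1, ((F.filter fun x => x 2 = z).card : ℝ) := by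
      rw [hcard, hsplit]
      push_cast
      ring
    rw [hc]
    have h1 : ((F.filter fun x => x 2 = 1).card : ℝ) ≤ 3 * (N:ℝ) :=
      le_trans (by exact_mod_cast hfib1) hIcardR
    have h2 : (∑ z ∈ I.erase 1, ((F.filter fun x => x 2 = z).card : ℝ))
        ≤ 3 * (N:ℝ) * (4 * C₁ * c₂ * (N:ℝ) ^ ε) :=
      le_trans hsum (mul_le_mul_of_nonneg_right herase (by positivity))
    linarith
  calc (F.card : ℝ) ≤ 3 * (N:ℝ) + 3 * (N:ℝ) * (4 * C₁ * c₂ * (N:ℝ) ^ ε) := htot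
    _ = 3 * (N:ℝ) + 12 * C₁ * c₂ * ((N:ℝ) * (N:ℝ) ^ ε) := by ring
    _ ≤ 3 * (N:ℝ) ^ ((1:ℝ) + ε) + 12 * C₁ * c₂ * (N:ℝ) ^ ((1:ℝ) + ε) := by
        rw [← hNpow]
        have h12 : (0:ℝ) ≤ 12 * C₁ * c₂ := by positivity
        nlinarith [hNle]
    _ = (3 + 12 * C₁ * c₂) * (N:ℝ) ^ ((1:ℝ) + ε) := by ring
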